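/- Let n ≥ 0 and let P be a polynomial in the 2n+2 variables x₁,…,x_{n+1}, y₁,…,y_{n+1} over ℚ satisfying: (i) translation invariance: for all constants c, d one has P(x₁+c,…,x_{n+1}+c, y₁+d,…,y_{n+1}+d) = P(x₁,…,x_{n+1}, y₁,…,y_{n+1}); (ii) scaling invariance: for every nonzero rational λ, P(λx₁,…,λx_{n+1}, λ⁻¹y₁,…,λ⁻¹y_{n+1}) = P(x₁,…,x_{n+1}, y₁,…,y_{n+1}); (iii) symmetry under exchange of the two families: P(y₁,…,y_{n+1}, x₁,…,x_{n+1}) = P(x₁,…,x_{n+1}, y₁,…,y_{n+1}). Then P belongs to the ℚ-subalgebra generated by the elements τ_{i,j} = −(x_i−x_j)(y_i−y_j)/2 for 1 ≤ i < j ≤ n+1; that is, P is a polynomial in the τ_{i,j}. -/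

import Mathlib

open MvPolynomial

namespace S2Aux
variable {n : ℕ}


noncomputable def aa (n : ℕ) (i : Fin (n+1)) : MvPolynomial (Fin (n+1) ⊕ Fin (n+1)) ℚ :=
  X (Sum.inl i) - X (Sum.inl 0)
noncomputable def pp (n : ℕ) (i : Fin (n+1)) : MvPolynomial (Fin (n+1) ⊕ Fin (n+1)) ℚ :=
  X (Sum.inr i) - X (Sum.inr 0)
noncomputable def ss (n : ℕ) (i j : Fin (n+1)) : MvPolynomial (Fin (n+1) ⊕ Fin (n+1)) ℚ :=
  aa n i * pp n j + aa n j * pp n i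
noncomputable def tt (n : ℕ) (i j : Fin (n+1)) : MvPolynomial (Fin (n+1) ⊕ Fin (n+1)) ℚ :=
  (X (Sum.inl i) - X (Sum.inl j)) * (X (Sum.inr i) - X (Sum.inr j))
noncomputable def oo (n : ℕ) (u v : Multiset (Fin (n+1))) :
    MvPolynomial (Fin (n+1) ⊕ Fin (n+1)) ℚ :=
  (u.map (aa n)).prod * (v.map (pp n)).prod + (v.map (aa n)).prod * (u.map (pp n)).prod

def Agen (n : ℕ) : Set (MvPolynomial (Fin (n+1) ⊕ Fin (n+1)) ℚ) :=
  {p | ∃ i j : Fin (n + 1), i < j ∧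
        p = C (-(1 / 2) : ℚ) *
          ((X (Sum.inl i) - X (Sum.inl j)) * (X (Sum.inr i) - X (Sum.inr j)))}

lemma L1 (i j : Fin (n+1)) (u v : Multiset (Fin (n+1))) :
    oo n (i ::ₘ u) (j ::ₘ v) + oo n (j ::ₘ u) (i ::ₘ v) = ss n i j * oo n u v := by
  simp only [oo, ss, Multiset.map_cons, Multiset.prod_cons]
  ring

lemma L2 (i c j d : Fin (n+1)) (u v : Multiset (Fin (n+1))) :
    (2:ℚ) • (oo n (i ::ₘ c ::ₘ u) (j ::ₘ d ::ₘ v) + oo n (j ::ₘ d ::ₘ u) (i ::ₘ c ::ₘ v)) =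
      (ss n i j * ss n c d + ss n i d * ss n c j - ss n i c * ss n d j) * oo n u v := by
  rw [two_smul]
  simp only [oo, ss, Multiset.map_cons, Multiset.prod_cons]
  ring

lemma tau_mem (i j : Fin (n+1)) : C (-(1/2) : ℚ) * tt n i j ∈ Algebra.adjoin ℚ (Agen n) := by
  rcases lt_trichotomy i j with h | h | h
  · exact Algebra.subset_adjoin ⟨i, j, h, rfl⟩
  · subst h
    have : C (-(1/2) : ℚ) * tt n i i = 0 := by simp [tt]
    rw [this]; exact zero_mem _
  · have : C (-(1/2) : ℚ) * tt n i j =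
        C (-(1/2) : ℚ) * ((X (Sum.inl j) - X (Sum.inl i)) * (X (Sum.inr j) - X (Sum.inr i))) := by
      unfold tt; ring
    rw [this]
    exact Algebra.subset_adjoin ⟨j, i, h, rfl⟩

lemma t_mem (i j : Fin (n+1)) : tt n i j ∈ Algebra.adjoin ℚ (Agen n) := by
  have h := Subalgebra.smul_mem _ (tau_mem (n := n) i j) (-2 : ℚ)
  have e : (-2 : ℚ) • (C (-(1/2) : ℚ) * tt n i j) = tt n i j := by
    rw [smul_eq_C_mul, ← mul_assoc, ← C_mul]
    norm_num
  rwa [e] at h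

lemma s_mem (i j : Fin (n+1)) : ss n i j ∈ Algebra.adjoin ℚ (Agen n) := by
  have e : ss n i j = tt n i 0 + tt n j 0 - tt n i j := by
    unfold ss tt aa pp; ring
  rw [e]
  exact sub_mem (add_mem (t_mem i 0) (t_mem j 0)) (t_mem i j)

lemma exists_cons_of_card_succ {α : Type*} {s : Multiset α} {k : ℕ}
    (h : Multiset.card s = k + 1) : ∃ a t, s = a ::ₘ t ∧ Multiset.card t = k := by
  obtain ⟨a, ha⟩ := Multiset.card_pos_iff_exists_mem.mp (by rw [h]; omega)
  obtain ⟨t, rfl⟩ := Multiset.exists_cons_of_mem ha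
  exact ⟨a, t, rfl, by simpa using h⟩

lemma core : ∀ (k : ℕ) (u v : Multiset (Fin (n+1))),
    Multiset.card u = k → Multiset.card v = k → oo n u v ∈ Algebra.adjoin ℚ (Agen n) := by
  intro k
  induction k using Nat.strong_induction_on with
  | _ k ih =>
    match k with
    | 0 =>
      intro u v hu hv
      rw [Multiset.card_eq_zero] at hu hv
      subst hu; subst hv
      have : oo n 0 0 = 1 + 1 := by simp [oo]
      rw [this]
      exact add_mem (one_mem _) (one_mem _)
    | 1 =>
      intro u v hu hv
      rw [Multiset.card_eq_one] at hu hv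
      obtain ⟨i, rfl⟩ := hu
      obtain ⟨j, rfl⟩ := hv
      have : oo n {i} {j} = ss n i j := by simp [oo, ss]
      rw [this]; exact s_mem i j
    | (k+2) =>
      intro u v hu hv
      obtain ⟨i, u₁, rfl, hu₁⟩ := exists_cons_of_card_succ hu
      obtain ⟨c, u₀, rfl, hu₀⟩ := exists_cons_of_card_succ hu₁
      obtain ⟨j, v₁, rfl, hv₁⟩ := exists_cons_of_card_succ hv
      obtain ⟨d, v₀, rfl, hv₀⟩ := exists_cons_of_card_succ hv₁
      have h1 : oo n (i ::ₘ c ::ₘ u₀) (j ::ₘ d ::ₘ v₀)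
          + oo n (j ::ₘ c ::ₘ u₀) (i ::ₘ d ::ₘ v₀) ∈ Algebra.adjoin ℚ (Agen n) := by
        rw [L1]
        exact mul_mem (s_mem i j)
          (ih (k+1) (by omega) _ _ (by simp [hu₀]) (by simp [hv₀]))
      have h2 : oo n (c ::ₘ j ::ₘ u₀) (d ::ₘ i ::ₘ v₀)
          + oo n (d ::ₘ j ::ₘ u₀) (c ::ₘ i ::ₘ v₀) ∈ Algebra.adjoin ℚ (Agen n) := by
        rw [L1]
        exact mul_mem (s_mem c d)
          (ih (k+1) (by omega) _ _ (by simp [hu₀]) (by simp [hv₀]))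
      have h3 : oo n (i ::ₘ c ::ₘ u₀) (j ::ₘ d ::ₘ v₀)
          + oo n (j ::ₘ d ::ₘ u₀) (i ::ₘ c ::ₘ v₀) ∈ Algebra.adjoin ℚ (Agen n) := by
        have hW : (ss n i j * ss n c d + ss n i d * ss n c j - ss n i c * ss n d j)
            * oo n u₀ v₀ ∈ Algebra.adjoin ℚ (Agen n) := by
          refine mul_mem ?_ (ih k (by omega) _ _ hu₀ hv₀)
          exact sub_mem (add_mem (mul_mem (s_mem i j) (s_mem c d))
            (mul_mem (s_mem i d) (s_mem c j))) (mul_mem (s_mem i c) (s_mem d j))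
        rw [← L2] at hW
        have := Subalgebra.smul_mem _ hW ((2:ℚ)⁻¹)
        rwa [inv_smul_smul₀ two_ne_zero] at this
      rw [Multiset.cons_swap c j u₀, Multiset.cons_swap d i v₀,
          Multiset.cons_swap d j u₀, Multiset.cons_swap c i v₀] at h2
      set X := oo n (i ::ₘ c ::ₘ u₀) (j ::ₘ d ::ₘ v₀) with hX
      set Y := oo n (j ::ₘ c ::ₘ u₀) (i ::ₘ d ::ₘ v₀) with hY
      set Z := oo n (j ::ₘ d ::ₘ u₀) (i ::ₘ c ::ₘ v₀) with hZ
      have hW : (X + Y) + (X + Z) - (Y + Z) ∈ Algebra.adjoin ℚ (Agen n) :=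
        sub_mem (add_mem h1 h3) h2
      have e : (X + Y) + (X + Z) - (Y + Z) = (2:ℚ) • X := by
        rw [two_smul]; abel
      rw [e] at hW
      have := Subalgebra.smul_mem _ hW ((2:ℚ)⁻¹)
      rwa [inv_smul_smul₀ two_ne_zero] at this



noncomputable def DD (n : ℕ) : Fin (n+1) ⊕ Fin (n+1) → MvPolynomial (Fin (n+1) ⊕ Fin (n+1)) ℚ :=
  Sum.elim (fun i => aa n i) (fun i => pp n i)

-- eval of aeval composition
lemma eval_aeval' {σ τ : Type*} (v : τ → ℚ) (g : σ → MvPolynomial τ ℚ)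
    (Q : MvPolynomial σ ℚ) :
    eval v (aeval g Q) = eval (fun s => eval v (g s)) Q := by
  induction Q using MvPolynomial.induction_on with
  | C a => simp
  | add p q hp hq => simp [← MvPolynomial.aeval_eq_bind₁, hp, hq]
  | mul_X p i hp => simp [← MvPolynomial.aeval_eq_bind₁, hp]

lemma step1 (P : MvPolynomial (Fin (n+1) ⊕ Fin (n+1)) ℚ)
    (htrans : ∀ c d : ℚ,
      aeval (Sum.elim (fun i => X (Sum.inl i) + C c) (fun i => X (Sum.inr i) + C d)) P = P) :
    aeval (DD n) P = P := by
  set f : Fin (n+1) ⊕ Fin (n+1) → MvPolynomial ((Fin (n+1) ⊕ Fin (n+1)) ⊕ Fin 2) ℚ :=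
    Sum.elim (fun i => X (Sum.inl (Sum.inl i)) + X (Sum.inr 0))
             (fun i => X (Sum.inl (Sum.inr i)) + X (Sum.inr 1)) with hf
  have key : aeval f P = rename Sum.inl P := by
    apply MvPolynomial.funext
    intro v
    rw [eval_aeval', eval_rename]
    have h2 := congrArg (eval (v ∘ Sum.inl)) (htrans (v (Sum.inr 0)) (v (Sum.inr 1)))
    rw [eval_aeval'] at h2
    have hpt : (fun s => eval v (f s)) = fun s =>
        eval (v ∘ Sum.inl) (Sum.elim (fun i => X (Sum.inl i) + C (v (Sum.inr 0)))
          (fun i => X (Sum.inr i) + C (v (Sum.inr 1))) s) := by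
      funext s
      cases s <;> simp [hf]
    rw [hpt]
    exact h2
  -- substitute back
  set h : MvPolynomial ((Fin (n+1) ⊕ Fin (n+1)) ⊕ Fin 2) ℚ
      →ₐ[ℚ] MvPolynomial (Fin (n+1) ⊕ Fin (n+1)) ℚ :=
    aeval (Sum.elim X (fun t : Fin 2 =>
      if t = 0 then - X (Sum.inl (0 : Fin (n+1))) else - X (Sum.inr (0 : Fin (n+1))))) with hh
  have happ := congrArg h key
  rw [comp_aeval_apply] at happ
  rw [show h (rename Sum.inl P) = P by
    rw [hh, aeval_rename]
    simp only [Function.comp_def, Sum.elim_inl]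
    exact aeval_X_left_apply P] at happ
  rw [show (fun i => h (f i)) = DD n by
    funext s
    cases s <;> simp [hf, hh, DD, aa, pp, sub_eq_add_neg]] at happ
  exact happ



lemma coeff_scale {σ : Type*} [Fintype σ] [DecidableEq σ] (c : σ → ℚ) (P : MvPolynomial σ ℚ)
    (m : σ →₀ ℕ) :
    coeff m (aeval (fun s => C (c s) * X s) P) = (∏ s, c s ^ m s) * coeff m P := by
  induction P using MvPolynomial.induction_on' with
  | add p q hp hq => simp [← MvPolynomial.aeval_eq_bind₁, map_add, coeff_add, hp, hq, mul_add]
  | monomial m' q =>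
    rw [aeval_monomial]
    have e1 : (m'.prod fun s k => (C (c s) * X s) ^ k)
        = C (∏ s, c s ^ m' s) * monomial m' 1 := by
      rw [show (fun (s : σ) (k : ℕ) => (C (c s) * X s) ^ k)
          = fun s k => C (c s ^ k) * X s ^ k by funext s k; rw [mul_pow, C_pow]]
      rw [Finsupp.prod_mul]
      congr 1
      · rw [← Finsupp.prod_pow m' c]
        exact (map_finsuppProd (C : ℚ →+* MvPolynomial σ ℚ) m' fun s k => c s ^ k).symm
      · rw [monomial_eq, C_1, one_mul]
    rw [e1, algebraMap_eq, ← mul_assoc, ← C_mul, C_mul_monomial, mul_one, coeff_monomial,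
      coeff_monomial]
    by_cases h : m' = m
    · subst h; rw [if_pos rfl, if_pos rfl]; ring
    · rw [if_neg h, if_neg h, mul_zero]

lemma step2 {n : ℕ} (P : MvPolynomial (Fin (n+1) ⊕ Fin (n+1)) ℚ)
    (hscale : ∀ l : ℚ, l ≠ 0 →
      aeval (Sum.elim (fun i => C l * X (Sum.inl i)) (fun i => C l⁻¹ * X (Sum.inr i))) P = P)
    (m : (Fin (n+1) ⊕ Fin (n+1)) →₀ ℕ) (hm : coeff m P ≠ 0) :
    (∑ i, m (Sum.inl i)) = ∑ i, m (Sum.inr i) := by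
  have h2 := hscale 2 two_ne_zero
  set c : Fin (n+1) ⊕ Fin (n+1) → ℚ := Sum.elim (fun _ => 2) (fun _ => 2⁻¹) with hc
  have hfun : (Sum.elim (fun i => C (2:ℚ) * X (Sum.inl i))
      (fun i => C (2:ℚ)⁻¹ * X (Sum.inr i)) :
      Fin (n+1) ⊕ Fin (n+1) → MvPolynomial (Fin (n+1) ⊕ Fin (n+1)) ℚ)
      = fun s => C (c s) * X s := by
    funext s; cases s <;> simp [hc]
  rw [hfun] at h2
  have h3 := congrArg (coeff m) h2
  rw [coeff_scale] at h3
  have h4 : (∏ s, c s ^ m s) = 1 := by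
    by_contra hne
    have := mul_right_cancel₀ hm (h3.trans (one_mul (coeff m P)).symm)
    exact hne this
  rw [Fintype.prod_sum_type] at h4
  simp only [hc, Sum.elim_inl, Sum.elim_inr] at h4
  rw [Finset.prod_pow_eq_pow_sum, Finset.prod_pow_eq_pow_sum] at h4
  rw [inv_pow] at h4
  have h5 : (2:ℚ) ^ (∑ i, m (Sum.inl i)) = 2 ^ (∑ i, m (Sum.inr i)) :=
    (mul_inv_eq_one₀ (pow_ne_zero _ two_ne_zero)).mp h4
  have h6 : (2:ℕ) ^ (∑ i, m (Sum.inl i)) = 2 ^ (∑ i, m (Sum.inr i)) := by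
    exact_mod_cast h5
  exact Nat.pow_right_injective (by norm_num) h6



noncomputable def DD' (n : ℕ) : Fin (n+1) ⊕ Fin (n+1) → MvPolynomial (Fin (n+1) ⊕ Fin (n+1)) ℚ :=
  Sum.elim (fun i => pp n i) (fun i => aa n i)

noncomputable def mu (n : ℕ) (m : (Fin (n+1) ⊕ Fin (n+1)) →₀ ℕ) : Multiset (Fin (n+1)) :=
  ∑ i, Multiset.replicate (m (Sum.inl i)) i
noncomputable def mv (n : ℕ) (m : (Fin (n+1) ⊕ Fin (n+1)) →₀ ℕ) : Multiset (Fin (n+1)) :=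
  ∑ i, Multiset.replicate (m (Sum.inr i)) i

lemma rep_prod {ι M : Type*} [DecidableEq ι] [CommMonoid M] (t : Finset ι) (α : ι → ℕ) (f : ι → M) :
    ((t.sum fun i => Multiset.replicate (α i) i).map f).prod = ∏ i ∈ t, f i ^ α i := by
  induction t using Finset.induction_on with
  | empty => simp
  | @insert a s hnotmem ih =>
    rw [Finset.sum_insert hnotmem, Multiset.map_add, Multiset.prod_add, ih,
      Finset.prod_insert hnotmem, Multiset.map_replicate, Multiset.prod_replicate]

lemma card_mu (m : (Fin (n+1) ⊕ Fin (n+1)) →₀ ℕ) :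
    Multiset.card (mu n m) = ∑ i, m (Sum.inl i) := by
  simp [mu, map_sum]

lemma card_mv (m : (Fin (n+1) ⊕ Fin (n+1)) →₀ ℕ) :
    Multiset.card (mv n m) = ∑ i, m (Sum.inr i) := by
  simp [mv, map_sum]

lemma bridge (m : (Fin (n+1) ⊕ Fin (n+1)) →₀ ℕ) :
    aeval (DD n) (monomial m (1:ℚ)) + aeval (DD' n) (monomial m (1:ℚ))
      = oo n (mu n m) (mv n m) := by
  have h1 : aeval (DD n) (monomial m (1:ℚ))
      = (∏ i, aa n i ^ m (Sum.inl i)) * ∏ i, pp n i ^ m (Sum.inr i) := by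
    rw [aeval_monomial, map_one, one_mul, Finsupp.prod_pow, Fintype.prod_sum_type]
    simp [DD]
  have h2 : aeval (DD' n) (monomial m (1:ℚ))
      = (∏ i, pp n i ^ m (Sum.inl i)) * ∏ i, aa n i ^ m (Sum.inr i) := by
    rw [aeval_monomial, map_one, one_mul, Finsupp.prod_pow, Fintype.prod_sum_type]
    simp [DD']
  have ha : ((mu n m).map (aa n)).prod = ∏ i, aa n i ^ m (Sum.inl i) := rep_prod _ _ _
  have hb : ((mv n m).map (pp n)).prod = ∏ i, pp n i ^ m (Sum.inr i) := rep_prod _ _ _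
  have hc : ((mv n m).map (aa n)).prod = ∏ i, aa n i ^ m (Sum.inr i) := rep_prod _ _ _
  have hd : ((mu n m).map (pp n)).prod = ∏ i, pp n i ^ m (Sum.inl i) := rep_prod _ _ _
  have htot : ((∏ i, aa n i ^ m (Sum.inl i)) * ∏ i, pp n i ^ m (Sum.inr i))
      + ((∏ i, pp n i ^ m (Sum.inl i)) * ∏ i, aa n i ^ m (Sum.inr i))
      = oo n (mu n m) (mv n m) := by
    unfold oo
    rw [ha, hb, hc, hd]
    ring
  exact (congrArg₂ (· + ·) h1 h2).trans htot


end S2Aux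

open S2Aux in

/-- Lemma: symmetric invariant polynomials are polynomials in the `τ`'s.
Let `P ∈ ℚ[x₀,…,xₙ, y₀,…,yₙ]` (variables indexed by `Fin (n+1) ⊕ Fin (n+1)`, `inl` for the
`x`'s and `inr` for the `y`'s) satisfy:
(i) translation invariance `P(x+c, y+d) = P(x,y)`;
(ii) scaling invariance `P(λx, λ⁻¹y) = P(x,y)` for `λ ≠ 0`;
(iii) symmetry under exchanging the two families, `P(y,x) = P(x,y)`.
Then `P` lies in the ℚ-subalgebra generated by the `τ_{i,j} = -(xᵢ-xⱼ)(yᵢ-yⱼ)/2`, `i < j`. -/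
theorem statement2 (n : ℕ) (P : MvPolynomial (Fin (n + 1) ⊕ Fin (n + 1)) ℚ)
    (htrans : ∀ c d : ℚ,
      aeval (Sum.elim (fun i => X (Sum.inl i) + C c) (fun i => X (Sum.inr i) + C d)) P = P)
    (hscale : ∀ l : ℚ, l ≠ 0 →
      aeval (Sum.elim (fun i => C l * X (Sum.inl i)) (fun i => C l⁻¹ * X (Sum.inr i))) P = P)
    (hswap : rename (Sum.elim Sum.inr Sum.inl) P = P) :
    P ∈ Algebra.adjoin ℚ
      {p : MvPolynomial (Fin (n + 1) ⊕ Fin (n + 1)) ℚ | ∃ i j : Fin (n + 1), i < j ∧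
        p = C (-(1 / 2) : ℚ) *
          ((X (Sum.inl i) - X (Sum.inl j)) * (X (Sum.inr i) - X (Sum.inr j)))} := by
  show P ∈ Algebra.adjoin ℚ (Agen n)
  have h1 : aeval (DD n) P = P := step1 P htrans
  have h2 : aeval (DD' n) P = P := by
    have h := congrArg (rename (Sum.elim Sum.inr Sum.inl)) h1
    rw [comp_aeval_apply] at h
    rw [show (fun i => rename (Sum.elim Sum.inr Sum.inl) (DD n i)) = DD' n by
      funext s; cases s <;> simp [DD, DD', aa, pp]] at h
    rwa [hswap] at h
  have hterm : ∀ m ∈ P.support,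
      aeval (DD n) (monomial m (coeff m P)) + aeval (DD' n) (monomial m (coeff m P))
        ∈ Algebra.adjoin ℚ (Agen n) := by
    intro m hm
    have hm' : coeff m P ≠ 0 := (mem_support_iff).mp hm
    have e : monomial m (coeff m P) = coeff m P • monomial m (1:ℚ) := by
      rw [smul_monomial, smul_eq_mul, mul_one]
    rw [e, map_smul, map_smul, ← smul_add, bridge]
    refine Subalgebra.smul_mem _ ?_ _
    exact core (∑ i, m (Sum.inl i)) (mu n m) (mv n m) (card_mu m)
      ((card_mv m).trans (step2 P hscale m hm').symm)
  have hsum : (2:ℚ) • P = ∑ m ∈ P.support,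
      (aeval (DD n) (monomial m (coeff m P)) + aeval (DD' n) (monomial m (coeff m P))) := by
    rw [Finset.sum_add_distrib, ← map_sum, ← map_sum, support_sum_monomial_coeff, h1, h2,
      two_smul]
  have h2P : (2:ℚ) • P ∈ Algebra.adjoin ℚ (Agen n) := by
    rw [hsum]
    exact Subalgebra.sum_mem _ hterm
  have := Subalgebra.smul_mem _ h2P ((2:ℚ)⁻¹)
  rwa [inv_smul_smul₀ two_ne_zero] at this
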